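/- Let f : [a,b] → ℝ be a convex function on [a,b]. Then 0 ≤ (1/8)·[ f′₊((a+b)/2) − f′₋((a+b)/2) ]·(b−a) ≤ (f(a) + f(b))/2 − (1/(b−a))·∫_a^b f(t) dt. -/

import Mathlib

open MeasureTheory Set intervalIntegral Filter Topology

/-- A convex function on `[a,b]` that is bounded below is interval integrable. -/
lemma convexOn_intervalIntegrable {a b : ℝ} (hab : a < b) {f : ℝ → ℝ}
    (hf : ConvexOn ℝ (Set.Icc a b) f) {L : ℝ} (hL : ∀ t ∈ Set.Icc a b, L ≤ f t) :
    IntervalIntegrable f volume a b := by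
  -- upper bound by max of endpoint values
  have hub : ∀ t ∈ Set.Icc a b, f t ≤ max (f a) (f b) := by
    intro t ht
    have hba : (0:ℝ) < b - a := by linarith
    have h1 : (0:ℝ) ≤ (b - t) / (b - a) := by
      apply div_nonneg <;> linarith [ht.2]
    have h2 : (0:ℝ) ≤ (t - a) / (b - a) := by
      apply div_nonneg <;> linarith [ht.1]
    have h3 : (b - t) / (b - a) + (t - a) / (b - a) = 1 := by
      field_simp
      ring
    have h4 : (b - t) / (b - a) * a + (t - a) / (b - a) * b = t := by
      field_simp; ring
    calc f t = f ((b - t) / (b - a) * a + (t - a) / (b - a) * b) := by rw [h4]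
      _ ≤ (b - t) / (b - a) * f a + (t - a) / (b - a) * f b :=
          hf.2 (Set.left_mem_Icc.2 hab.le) (Set.right_mem_Icc.2 hab.le) h1 h2 h3
      _ ≤ (b - t) / (b - a) * max (f a) (f b) + (t - a) / (b - a) * max (f a) (f b) := by
          gcongr
          · exact le_max_left _ _
          · exact le_max_right _ _
      _ = max (f a) (f b) := by rw [← add_mul, h3, one_mul]
  have hIoo : MeasureTheory.IntegrableOn f (Set.Ioo a b) volume := by
    have hc : ContinuousOn f (Set.Ioo a b) := by
      have := hf.continuousOn_interior
      rwa [interior_Icc] at this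
    refine ⟨hc.aestronglyMeasurable measurableSet_Ioo, ?_⟩
    apply MeasureTheory.HasFiniteIntegral.restrict_of_bounded
      (C := |L| + |max (f a) (f b)|) measure_Ioo_lt_top
    filter_upwards [MeasureTheory.ae_restrict_mem measurableSet_Ioo] with t ht
    have ht' : t ∈ Set.Icc a b := Set.Ioo_subset_Icc_self ht
    have h1 := hL t ht'
    have h2 := hub t ht'
    rw [Real.norm_eq_abs, abs_le]
    constructor
    · have := neg_abs_le L
      have := abs_nonneg (max (f a) (f b))
      linarith
    · have := le_abs_self (max (f a) (f b))
      have := abs_nonneg L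
      linarith
  rw [intervalIntegrable_iff, Set.uIoc_of_le hab.le]
  exact hIoo.congr_set_ae (MeasureTheory.Ioo_ae_eq_Ioc (μ := volume) (a := a) (b := b)).symm

/-- Chord inequality: the integral of a convex function over `[a,b]` is at most
the trapezoid value. -/
lemma chord_integral_le {a b : ℝ} (hab : a < b) {f : ℝ → ℝ}
    (hf : ConvexOn ℝ (Set.Icc a b) f) (hi : IntervalIntegrable f volume a b) :
    ∫ t in a..b, f t ≤ (b - a) * (f a + f b) / 2 := by
  have hba : (0:ℝ) < b - a := by linarith
  set s : ℝ := (f b - f a) / (b - a) with hs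
  have hsb : s * (b - a) = f b - f a := div_mul_cancel₀ _ hba.ne'
  have key : ∫ t in a..b, f t ≤ ∫ t in a..b, (f a - s * a + s * t) := by
    apply intervalIntegral.integral_mono_on hab.le hi
    · exact (continuous_const.add (continuous_const.mul continuous_id)).intervalIntegrable a b
    · intro t ht
      rcases eq_or_lt_of_le ht.1 with rfl | h1
      · have h0 : f a - s * a + s * a = f a := by ring
        linarith [h0]
      · rcases eq_or_lt_of_le ht.2 with rfl | h2
        · nlinarith [hsb]
        · have h3 := hf.secant_mono_aux1 (Set.left_mem_Icc.2 hab.le)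
            (Set.right_mem_Icc.2 hab.le) h1 h2
          rw [← mul_le_mul_iff_right₀ hba]
          nlinarith [hsb, h3]
  have hval : ∫ t in a..b, (f a - s * a + s * t) = (f a - s * a) * (b - a) + s * ((b^2 - a^2)/2) := by
    rw [intervalIntegral.integral_add (intervalIntegrable_const)
      ((intervalIntegrable_id).const_mul s),
      intervalIntegral.integral_const, intervalIntegral.integral_const_mul, integral_id]
    simp [smul_eq_mul]; ring
  rw [hval] at key
  nlinarith [hsb, key]

/-- **A sharp lower bound for the Hermite–Hadamard difference** (Corollary 1):
for a convex `f : [a,b] → ℝ`, with `fdp`, `fdm` the right and left derivatives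
of `f` at the midpoint `(a+b)/2`,
`0 ≤ (1/8)[f′₊((a+b)/2) − f′₋((a+b)/2)](b−a) ≤ (f(a)+f(b))/2 − (1/(b−a))∫_a^b f`. -/
theorem hermite_hadamard_difference_lower_bound
    (a b : ℝ) (hab : a < b) (f : ℝ → ℝ)
    (hf : ConvexOn ℝ (Set.Icc a b) f) (fdp fdm : ℝ)
    (hfdp : HasDerivWithinAt f fdp (Set.Ici ((a + b) / 2)) ((a + b) / 2))
    (hfdm : HasDerivWithinAt f fdm (Set.Iic ((a + b) / 2)) ((a + b) / 2)) :
    0 ≤ (1 / 8) * (fdp - fdm) * (b - a) ∧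
      (1 / 8) * (fdp - fdm) * (b - a) ≤
        (f a + f b) / 2 - (1 / (b - a)) * ∫ t in a..b, f t := by
  set m : ℝ := (a + b) / 2 with hm
  have ham : a < m := by rw [hm]; linarith
  have hmb : m < b := by rw [hm]; linarith
  have hmI : m ∈ Set.Icc a b := ⟨ham.le, hmb.le⟩
  -- slope limits
  have tendsto_p : Tendsto (slope f m) (𝓝[>] m) (𝓝 fdp) := by
    rw [hasDerivWithinAt_iff_tendsto_slope, Set.Ici_sdiff_left] at hfdp
    exact hfdp
  have tendsto_m : Tendsto (slope f m) (𝓝[<] m) (𝓝 fdm) := by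
    rw [hasDerivWithinAt_iff_tendsto_slope, Set.Iic_diff_right] at hfdm
    exact hfdm
  have hslope : ∀ x ∈ Set.Icc a b, ∀ y ∈ Set.Icc a b, x ≠ m → y ≠ m → x ≤ y →
      slope f m x ≤ slope f m y := by
    intro x hx y hy hxm hym hxy
    rw [slope_def_field, slope_def_field]
    exact hf.secant_mono hmI hx hy hxm hym hxy
  -- fdp ≤ slope f m t for t ∈ (m, b]
  have h_p_le : ∀ t ∈ Set.Ioc m b, fdp ≤ slope f m t := by
    intro t ht
    refine le_of_tendsto tendsto_p ?_
    filter_upwards [Ioo_mem_nhdsGT ht.1] with u hu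
    exact hslope u ⟨by linarith [hu.1], by linarith [hu.2, ht.2]⟩ t ⟨by linarith [ht.1], ht.2⟩
      (ne_of_gt hu.1) (ne_of_gt ht.1) hu.2.le
  -- slope f m s ≤ fdm for s ∈ [a, m)
  have h_m_ge : ∀ t ∈ Set.Ico a m, slope f m t ≤ fdm := by
    intro t ht
    refine ge_of_tendsto tendsto_m ?_
    filter_upwards [Ioo_mem_nhdsLT ht.2] with u hu
    exact hslope t ⟨ht.1, by linarith [ht.2]⟩ u ⟨by linarith [ht.1, hu.1], by linarith [hu.2]⟩
      (ne_of_lt ht.2) (ne_of_lt hu.2) hu.1.le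
  -- fdm ≤ fdp
  have hpm : fdm ≤ fdp := by
    have h1 : ∀ t ∈ Set.Ioo m b, fdm ≤ slope f m t := by
      intro t ht
      refine le_of_tendsto tendsto_m ?_
      filter_upwards [Ioo_mem_nhdsLT ham] with u hu
      exact hslope u ⟨hu.1.le, by linarith [hu.2]⟩ t ⟨by linarith [ht.1], ht.2.le⟩
        (ne_of_lt hu.2) (ne_of_gt ht.1) (by linarith [hu.2, ht.1])
    refine ge_of_tendsto tendsto_p ?_
    filter_upwards [Ioo_mem_nhdsGT hmb] with t ht
    exact h1 t ht
  have hba : (0:ℝ) < b - a := by linarith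
  -- tangent value bounds
  have hfb : f m + fdp * (b - m) ≤ f b := by
    have := h_p_le b ⟨hmb, le_rfl⟩
    rw [slope_def_field, le_div_iff₀ (by linarith : (0:ℝ) < b - m)] at this
    linarith
  have hfa : f m + fdm * (a - m) ≤ f a := by
    have := h_m_ge a ⟨le_rfl, ham⟩
    rw [slope_def_field, div_le_iff_of_neg (by linarith : a - m < 0)] at this
    linarith
  -- lower bound for integrability
  have hLbd : ∀ t ∈ Set.Icc a b, f m - (|fdm| + |fdp|) * (b - a) ≤ f t := by
    intro t ht
    have habs : |t - m| ≤ b - a := by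
      rw [abs_le]; constructor <;> [linarith [ht.1]; linarith [ht.2]]
    rcases lt_trichotomy t m with h | rfl | h
    · have := h_m_ge t ⟨ht.1, h⟩
      rw [slope_def_field, div_le_iff_of_neg (by linarith : t - m < 0)] at this
      have h2 : |fdm * (t - m)| ≤ |fdm| * (b - a) := by
        rw [abs_mul]; gcongr
      have h3 := neg_abs_le (fdm * (t - m))
      have := abs_nonneg fdp
      nlinarith
    · have := abs_nonneg fdm; have := abs_nonneg fdp
      nlinarith
    · have := h_p_le t ⟨h, ht.2⟩
      rw [slope_def_field, le_div_iff₀ (by linarith : (0:ℝ) < t - m)] at this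
      have h2 : |fdp * (t - m)| ≤ |fdp| * (b - a) := by
        rw [abs_mul]; gcongr
      have h3 := neg_abs_le (fdp * (t - m))
      have := abs_nonneg fdm
      nlinarith
  have hi : IntervalIntegrable f volume a b := convexOn_intervalIntegrable hab hf hLbd
  have hi1 : IntervalIntegrable f volume a m := by
    apply hi.mono_set
    rw [Set.uIcc_of_le ham.le, Set.uIcc_of_le hab.le]
    exact Set.Icc_subset_Icc_right hmb.le
  have hi2 : IntervalIntegrable f volume m b := by
    apply hi.mono_set
    rw [Set.uIcc_of_le hmb.le, Set.uIcc_of_le hab.le]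
    exact Set.Icc_subset_Icc_left ham.le
  have c1 : ∫ t in a..m, f t ≤ (m - a) * (f a + f m) / 2 :=
    chord_integral_le ham (hf.subset (Set.Icc_subset_Icc_right hmb.le) (convex_Icc _ _)) hi1
  have c2 : ∫ t in m..b, f t ≤ (b - m) * (f m + f b) / 2 :=
    chord_integral_le hmb (hf.subset (Set.Icc_subset_Icc_left ham.le) (convex_Icc _ _)) hi2
  have hsplit : (∫ t in a..b, f t) = (∫ t in a..m, f t) + ∫ t in m..b, f t :=
    (intervalIntegral.integral_add_adjacent_intervals hi1 hi2).symm
  set I : ℝ := ∫ t in a..b, f t with hI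
  have hbm : b - m = (b - a) / 2 := by rw [hm]; ring
  have ham' : a - m = -((b - a) / 2) := by rw [hm]; ring
  have hma : m - a = (b - a) / 2 := by rw [hm]; ring
  rw [hbm] at hfb
  rw [ham'] at hfa
  rw [hma] at c1
  rw [hbm] at c2
  have key : (1/8) * (fdp - fdm) * (b - a) * (b - a) + I ≤ (f a + f b) / 2 * (b - a) := by
    rw [hsplit]
    nlinarith [mul_le_mul_of_nonneg_right hfa hba.le,
      mul_le_mul_of_nonneg_right hfb hba.le, c1, c2]
  constructor
  · have : (0:ℝ) ≤ fdp - fdm := by linarith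
    positivity
  · have h3 : (1/8) * (fdp - fdm) * (b - a) + (1/(b - a)) * I ≤ (f a + f b) / 2 := by
      rw [← mul_le_mul_iff_left₀ hba]
      have hIe : (1/(b - a)) * I * (b - a) = I := by field_simp
      nlinarith [key]
    linarith
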